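/- If (𝒞, 𝒦) is a connective island domain, then every admissible subfamily of 𝒞 is CDW-independent (i.e., CD-independent and weakly independent). -/

import Mathlib

open Finset

variable {U : Type*}

/-- `K` covers `S` in the poset `(𝒦, ⊆)`. -/
def Covers (𝒦 : Finset (Finset U)) (S K : Finset U) : Prop :=
  S ⊂ K ∧ ∀ K' ∈ 𝒦, S ⊂ K' → ¬K' ⊂ K

/-- `min h(K) < min h(S)` (for nonempty finite `S`, `K`). -/
def MinLt (h : U → ℝ) (K S : Finset U) : Prop :=
  ∃ k ∈ K, ∀ s ∈ S, h k < h s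

/-- `S` is a pre-island with respect to `(𝒞, 𝒦, h)`. -/
def IsPreIsland (𝒞 𝒦 : Finset (Finset U)) (h : U → ℝ) (S : Finset U) : Prop :=
  S ∈ 𝒞 ∧ S.Nonempty ∧ ∀ K ∈ 𝒦, Covers 𝒦 S K → MinLt h K S

/-- `S` is an island with respect to `(𝒞, 𝒦, h)`. -/
def IsIsland [DecidableEq U] (𝒞 𝒦 : Finset (Finset U)) (h : U → ℝ) (S : Finset U) : Prop :=
  S ∈ 𝒞 ∧ S.Nonempty ∧ ∀ K ∈ 𝒦, Covers 𝒦 S K → ∀ u ∈ K \ S, ∀ s ∈ S, h u < h s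

/-- `(𝒞, 𝒦)` is an island domain on `U`. -/
def IslandDomain [Fintype U] (𝒞 𝒦 : Finset (Finset U)) : Prop :=
  𝒞 ⊆ 𝒦 ∧ Finset.univ ∈ 𝒞

/-- `ℋ` is admissible with respect to `(𝒞, 𝒦)`. -/
def Admissible [DecidableEq U] [Fintype U] (𝒞 𝒦 ℋ : Finset (Finset U)) : Prop :=
  ℋ ⊆ 𝒞 ∧ (∅ : Finset U) ∉ ℋ ∧ Finset.univ ∈ ℋ ∧
    ∀ 𝒜 ⊆ ℋ, 𝒜.Nonempty → (∀ A ∈ 𝒜, ∀ B ∈ 𝒜, A ⊆ B → A = B) →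
      ∃ H ∈ 𝒜, ∀ K ∈ 𝒦, H ⊂ K → ¬K ⊆ 𝒜.sup id

/-- `𝒮` is the system of pre-islands corresponding to `(𝒞, 𝒦, h)` for some `h`. -/
def IsSystemOfPreIslands (𝒞 𝒦 𝒮 : Finset (Finset U)) : Prop :=
  ∃ h : U → ℝ, ∀ S, S ∈ 𝒮 ↔ IsPreIsland 𝒞 𝒦 h S

/-- `𝒮` is the system of islands corresponding to `(𝒞, 𝒦, h)` for some `h`. -/
def IsSystemOfIslands [DecidableEq U] (𝒞 𝒦 𝒮 : Finset (Finset U)) : Prop :=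
  ∃ h : U → ℝ, ∀ S, S ∈ 𝒮 ↔ IsIsland 𝒞 𝒦 h S

/-- `(𝒞, 𝒦)` is a connective island domain. -/
def Connective [DecidableEq U] (𝒞 𝒦 : Finset (Finset U)) : Prop :=
  ∀ A ∈ 𝒞, ∀ B ∈ 𝒞, (A ∩ B).Nonempty → ¬B ⊆ A → ∃ K ∈ 𝒦, A ⊂ K ∧ K ⊆ A ∪ B

/-- Any two members are comparable or disjoint. -/
def CDIndependent [DecidableEq U] (ℋ : Finset (Finset U)) : Prop :=
  ∀ A ∈ ℋ, ∀ B ∈ ℋ, A ⊆ B ∨ B ⊆ A ∨ A ∩ B = ∅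

def WeaklyIndependent [DecidableEq U] (ℋ : Finset (Finset U)) : Prop :=
  ∀ H ∈ ℋ, ∀ 𝒢 ⊆ ℋ, 𝒢.Nonempty → H ⊆ 𝒢.sup id → ∃ G ∈ 𝒢, H ⊆ G

def CDWIndependent [DecidableEq U] (ℋ : Finset (Finset U)) : Prop :=
  CDIndependent ℋ ∧ WeaklyIndependent ℋ

/-- The proximity relation `δ`: `A δ B` iff some `K ∈ 𝒦` with `A ⪯ K` meets `B`. -/
def Delta [DecidableEq U] (𝒦 : Finset (Finset U)) (A B : Finset U) : Prop :=
  ∃ K ∈ 𝒦, (K = A ∨ Covers 𝒦 A K) ∧ (K ∩ B).Nonempty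

def Distant [DecidableEq U] (𝒦 : Finset (Finset U)) (A B : Finset U) : Prop :=
  ¬Delta 𝒦 A B ∧ ¬Delta 𝒦 B A

/-- Any two incomparable members of `ℋ` are distant. -/
def DistantFamily [DecidableEq U] (𝒦 ℋ : Finset (Finset U)) : Prop :=
  ∀ A ∈ ℋ, ∀ B ∈ ℋ, ¬A ⊆ B → ¬B ⊆ A → Distant 𝒦 A B

/-- A proximity domain: connective and `δ` symmetric on nonempty members of `𝒞`. -/
def ProximityDomain [DecidableEq U] (𝒞 𝒦 : Finset (Finset U)) : Prop :=
  Connective 𝒞 𝒦 ∧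
    ∀ A ∈ 𝒞, ∀ B ∈ 𝒞, A.Nonempty → B.Nonempty → (Delta 𝒦 A B ↔ Delta 𝒦 B A)

/-- in a connective island domain every admissible family is CDW-independent. -/
theorem admissible_cdwIndependent [Fintype U] [DecidableEq U] [Nonempty U]
    (𝒞 𝒦 ℋ : Finset (Finset U)) (hdom : IslandDomain 𝒞 𝒦)
    (hconn : Connective 𝒞 𝒦) (hadm : Admissible 𝒞 𝒦 ℋ) :
    CDWIndependent ℋ := by
  obtain ⟨hsub, hne, huniv, hkey⟩ := hadm
  constructor
  · -- CD-independence
    intro A hA B hB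
    by_contra hcon
    push_neg at hcon
    obtain ⟨hAB, hBA, hint⟩ := hcon
    have hABne : A ≠ B := fun h => hAB (h ▸ subset_rfl)
    have hanti : ∀ X ∈ ({A, B} : Finset (Finset U)), ∀ Y ∈ ({A, B} : Finset (Finset U)),
        X ⊆ Y → X = Y := by
      intro X hX Y hY hXY
      simp only [Finset.mem_insert, Finset.mem_singleton] at hX hY
      rcases hX with rfl | rfl <;> rcases hY with rfl | rfl <;>
        first | rfl | (exact absurd hXY hAB) | (exact absurd hXY hBA)
    have hsubH : ({A, B} : Finset (Finset U)) ⊆ ℋ := by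
      intro X hX
      simp only [Finset.mem_insert, Finset.mem_singleton] at hX
      rcases hX with rfl | rfl <;> assumption
    obtain ⟨H, hHmem, hHkey⟩ := hkey {A, B} hsubH ⟨A, by simp⟩ hanti
    have hsup : ({A, B} : Finset (Finset U)).sup id = A ∪ B := by
      simp [Finset.sup_insert, Finset.sup_singleton, Finset.sup_eq_union]
    simp only [Finset.mem_insert, Finset.mem_singleton] at hHmem
    have hintne : (A ∩ B).Nonempty := hint
    rcases hHmem with rfl | rfl
    · obtain ⟨K, hK𝒦, hHK, hKsub⟩ := hconn H (hsub hA) B (hsub hB) hintne hBA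
      exact hHkey K hK𝒦 hHK (hsup ▸ hKsub)
    · obtain ⟨K, hK𝒦, hHK, hKsub⟩ := hconn H (hsub hB) A (hsub hA)
        (by rwa [Finset.inter_comm] at hintne) hAB
      exact hHkey K hK𝒦 hHK (hsup ▸ (hKsub.trans (Finset.union_comm H A ▸ subset_rfl)))
  · -- weak independence
    intro H hH 𝒢 h𝒢 h𝒢ne hHsup
    by_contra hcon
    push_neg at hcon
    have hHne : H.Nonempty := by
      rw [Finset.nonempty_iff_ne_empty]
      rintro rfl; exact hne hH
    set ℱ : Finset (Finset U) := 𝒢.filter (fun G => (G ∩ H).Nonempty) with hℱdef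
    have hℱ𝒢 : ℱ ⊆ 𝒢 := Finset.filter_subset _ _
    set 𝒜 : Finset (Finset U) := ℱ.filter (fun M => ∀ G ∈ ℱ, ¬M ⊂ G) with h𝒜def
    have h𝒜ℱ : 𝒜 ⊆ ℱ := Finset.filter_subset _ _
    -- every element of ℱ lies below some element of 𝒜
    have hmax : ∀ G ∈ ℱ, ∃ M ∈ 𝒜, G ⊆ M := by
      intro G hG
      obtain ⟨M, hM, hMmax⟩ := Finset.exists_maximal (s := ℱ.filter (fun X => G ⊆ X))
        ⟨G, Finset.mem_filter.mpr ⟨hG, subset_rfl⟩⟩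
      rw [Finset.mem_filter] at hM
      refine ⟨M, Finset.mem_filter.mpr ⟨hM.1, fun X hX hMX => ?_⟩, hM.2⟩
      exact hMX.2 (hMmax (Finset.mem_filter.mpr ⟨hX, hM.2.trans hMX.subset⟩) hMX.subset)
    have hℱne : ℱ.Nonempty := by
      obtain ⟨x, hx⟩ := hHne
      have hx' : x ∈ 𝒢.sup id := hHsup hx
      rw [Finset.mem_sup] at hx'
      obtain ⟨G, hG, hxG⟩ := hx'
      exact ⟨G, Finset.mem_filter.mpr ⟨hG, ⟨x, Finset.mem_inter.mpr ⟨hxG, hx⟩⟩⟩⟩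
    have h𝒜ne : 𝒜.Nonempty := by
      obtain ⟨G, hG⟩ := hℱne
      obtain ⟨M, hM, _⟩ := hmax G hG
      exact ⟨M, hM⟩
    have hanti : ∀ X ∈ 𝒜, ∀ Y ∈ 𝒜, X ⊆ Y → X = Y := by
      intro X hX Y hY hXY
      by_contra hne'
      exact (Finset.mem_filter.mp hX).2 Y (h𝒜ℱ hY) (Finset.ssubset_iff_subset_ne.mpr ⟨hXY, hne'⟩)
    obtain ⟨M, hM𝒜, hMkey⟩ := hkey 𝒜 (fun X hX => h𝒢 (hℱ𝒢 (h𝒜ℱ hX))) h𝒜ne hanti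
    have hMℱ := Finset.mem_filter.mp (h𝒜ℱ hM𝒜)
    -- H is contained in the sup of 𝒜
    have hHsup𝒜 : H ⊆ 𝒜.sup id := by
      intro x hx
      have hx' : x ∈ 𝒢.sup id := hHsup hx
      rw [Finset.mem_sup] at hx'
      obtain ⟨G, hG, hxG⟩ := hx'
      have hGℱ : G ∈ ℱ := Finset.mem_filter.mpr ⟨hG, ⟨x, Finset.mem_inter.mpr ⟨hxG, hx⟩⟩⟩
      obtain ⟨M', hM', hGM'⟩ := hmax G hGℱ
      rw [Finset.mem_sup]
      exact ⟨M', hM', hGM' hxG⟩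
    have hMsup : M ⊆ 𝒜.sup id := Finset.le_sup (f := id) hM𝒜
    -- apply connectivity to M and H
    obtain ⟨K, hK𝒦, hMK, hKsub⟩ := hconn M (hsub (h𝒢 (hℱ𝒢 (h𝒜ℱ hM𝒜)))) H (hsub hH)
      hMℱ.2 (hcon M (hℱ𝒢 (h𝒜ℱ hM𝒜)))
    exact hMkey K hK𝒦 hMK (hKsub.trans (Finset.union_subset hMsup hHsup𝒜))
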